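/- Let Λ be a commutative ring, let R = Λ[x_1, …, x_m] be the polynomial ring graded by total degree (so deg x_i = 1), and let M be an R-module equipped with a ℤ-grading, i.e., an internal direct sum decomposition M = ⊕_{d ∈ ℤ} M_d into Λ-submodules such that R_e · M_d ⊆ M_{d+e} for all e ≥ 0 and d ∈ ℤ. Assume that the underlying Λ-module of M is finitely generated. Then: (i) M_d = 0 for all but finitely many d ∈ ℤ; (ii) if M ≠ 0 and D is the largest integer with M_D ≠ 0, then M_D is a graded R-submodule of M annihilated by the ideal (x_1, …, x_m), so the R-action on M_D factors through the augmentation R → Λ; and (iii) M admits a finite chain of graded R-submodules 0 = M^0 ⊆ M^1 ⊆ … ⊆ M^k = M such that each successive quotient M^{t+1}/M^t is annihilated by the ideal (x_1, …, x_m). -/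

import Mathlib

open DirectSum

section Aux

set_option linter.unusedSectionVars false

variable {Λ : Type*} [CommRing Λ] {m : ℕ} {M : Type*} [AddCommGroup M]
    [Module (MvPolynomial (Fin m) Λ) M] [Module Λ M]
    [IsScalarTower Λ (MvPolynomial (Fin m) Λ) M]
    (ℳ : ℤ → Submodule Λ M) [DirectSum.Decomposition ℳ]

theorem aux_homog_smul
    (hcompat : ∀ (e : ℕ) (r : MvPolynomial (Fin m) Λ),
      r ∈ MvPolynomial.homogeneousSubmodule (Fin m) Λ e →
      ∀ (d : ℤ) (x : M), x ∈ ℳ d → r • x ∈ ℳ (d + e))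
    (e : ℕ) (r : MvPolynomial (Fin m) Λ)
    (hr : r ∈ MvPolynomial.homogeneousSubmodule (Fin m) Λ e) (x : M) (d : ℤ) :
    (DirectSum.decompose ℳ (r • x) d : M)
      = r • (DirectSum.decompose ℳ x (d - e) : M) := by
  refine DirectSum.Decomposition.inductionOn ℳ
    (motive := fun x => ∀ d : ℤ, (DirectSum.decompose ℳ (r • x) d : M)
      = r • (DirectSum.decompose ℳ x (d - e) : M)) ?_ ?_ ?_ x d
  · intro d; simp
  · intro i y d
    have h1 : r • (y : M) ∈ ℳ (i + e) := hcompat e r hr i y y.2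
    by_cases h : d = i + (e : ℤ)
    · subst h
      rw [DirectSum.decompose_of_mem_same ℳ h1, add_sub_cancel_right,
        DirectSum.decompose_of_mem_same ℳ y.2]
    · rw [DirectSum.decompose_of_mem_ne ℳ h1 (fun hc => h hc.symm),
        DirectSum.decompose_of_mem_ne ℳ y.2 (fun hc => h (by omega)), smul_zero]
  · intro a b ha hb d
    rw [smul_add, DirectSum.decompose_add, DirectSum.add_apply, Submodule.coe_add,
      ha d, hb d, DirectSum.decompose_add, DirectSum.add_apply, Submodule.coe_add,
      smul_add]

theorem aux_decompose_coe_sum {ι : Type*} (s : Finset ι) (f : ι → M) (d : ℤ) :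
    (DirectSum.decompose ℳ (∑ i ∈ s, f i) d : M)
      = ∑ i ∈ s, (DirectSum.decompose ℳ (f i) d : M) := by
  classical
  induction s using Finset.induction with
  | empty => simp
  | @insert _ _ h ih =>
    rw [Finset.sum_insert h, Finset.sum_insert h, DirectSum.decompose_add,
      DirectSum.add_apply, Submodule.coe_add, ih]

def auxF
    (hcompat : ∀ (e : ℕ) (r : MvPolynomial (Fin m) Λ),
      r ∈ MvPolynomial.homogeneousSubmodule (Fin m) Λ e →
      ∀ (d : ℤ) (x : M), x ∈ ℳ d → r • x ∈ ℳ (d + e))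
    (c : ℤ) : Submodule (MvPolynomial (Fin m) Λ) M where
  carrier := {x | ∀ d : ℤ, d < c → (DirectSum.decompose ℳ x d : M) = 0}
  zero_mem' := by intro d _; simp
  add_mem' := by
    intro a b ha hb d hd
    rw [DirectSum.decompose_add, DirectSum.add_apply, Submodule.coe_add,
      ha d hd, hb d hd, add_zero]
  smul_mem' := by
    intro r x hx d hd
    conv_lhs => rw [← MvPolynomial.sum_homogeneousComponent r]
    rw [Finset.sum_smul, aux_decompose_coe_sum]
    refine Finset.sum_eq_zero fun e _ => ?_
    rw [aux_homog_smul ℳ hcompat e _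
      ((MvPolynomial.mem_homogeneousSubmodule _ _).mpr
        (MvPolynomial.homogeneousComponent_isHomogeneous e r)),
      hx _ (by omega), smul_zero]

theorem mem_auxF
    (hcompat : ∀ (e : ℕ) (r : MvPolynomial (Fin m) Λ),
      r ∈ MvPolynomial.homogeneousSubmodule (Fin m) Λ e →
      ∀ (d : ℤ) (x : M), x ∈ ℳ d → r • x ∈ ℳ (d + e))
    (c : ℤ) (x : M) :
    x ∈ auxF ℳ hcompat c ↔ ∀ d : ℤ, d < c → (DirectSum.decompose ℳ x d : M) = 0 :=
  Iff.rfl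

end Aux

theorem graded_module_over_polynomial_ring_filtration
    (Λ : Type*) [CommRing Λ] (m : ℕ) (M : Type*) [AddCommGroup M]
    [Module (MvPolynomial (Fin m) Λ) M] [Module Λ M]
    [IsScalarTower Λ (MvPolynomial (Fin m) Λ) M]
    (ℳ : ℤ → Submodule Λ M) [DirectSum.Decomposition ℳ]
    (hcompat : ∀ (e : ℕ) (r : MvPolynomial (Fin m) Λ),
      r ∈ MvPolynomial.homogeneousSubmodule (Fin m) Λ e →
      ∀ (d : ℤ) (x : M), x ∈ ℳ d → r • x ∈ ℳ (d + e))
    [Module.Finite Λ M] :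
    -- (i)
    {d : ℤ | ℳ d ≠ ⊥}.Finite ∧
    -- (ii)
    (∀ D : ℤ, Nontrivial M → ℳ D ≠ ⊥ → (∀ d : ℤ, D < d → ℳ d = ⊥) →
      (∀ x ∈ ℳ D, ∀ r : MvPolynomial (Fin m) Λ, r • x ∈ ℳ D) ∧
      (∀ x ∈ ℳ D, ∀ i : Fin m, (MvPolynomial.X i : MvPolynomial (Fin m) Λ) • x = 0) ∧
      (∀ x ∈ ℳ D, ∀ r : MvPolynomial (Fin m) Λ,
        r • x = MvPolynomial.constantCoeff r • x)) ∧
    -- (iii)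
    (∃ (k : ℕ) (chain : Fin (k + 1) → Submodule (MvPolynomial (Fin m) Λ) M),
      Monotone chain ∧
      chain 0 = ⊥ ∧
      chain (Fin.last k) = ⊤ ∧
      (∀ (t : Fin (k + 1)) (d : ℤ) (x : M),
        x ∈ chain t → ((DirectSum.decompose ℳ x) d : M) ∈ chain t) ∧
      (∀ (t : Fin k) (i : Fin m) (x : M), x ∈ chain t.succ →
        (MvPolynomial.X i : MvPolynomial (Fin m) Λ) • x ∈ chain t.castSucc)) := by
  classical
  -- component vanishing in trivial degrees
  have hcomp0 : ∀ (x : M) (d : ℤ), ℳ d = ⊥ → (DirectSum.decompose ℳ x d : M) = 0 := by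
    intro x d h
    exact (Submodule.eq_bot_iff _).mp h _ (SetLike.coe_mem _)
  -- (i)
  obtain ⟨S, hS⟩ := Module.finite_def.mp (inferInstance : Module.Finite Λ M)
  set T : Finset ℤ := S.sup (fun s => (DirectSum.decompose ℳ s).support) with hT
  have hsupp : ∀ x : M, ∀ d : ℤ, d ∉ T → (DirectSum.decompose ℳ x d : M) = 0 := by
    intro x
    have hx : x ∈ Submodule.span Λ (S : Set M) := by rw [hS]; trivial
    refine Submodule.span_induction ?_ ?_ ?_ ?_ hx
    · intro s hs d hd
      have : d ∉ (DirectSum.decompose ℳ s).support := fun hmem =>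
        hd (Finset.mem_sup.mpr ⟨s, hs, hmem⟩)
      rw [DFinsupp.notMem_support_iff.mp this]; rfl
    · intro d _; simp
    · intro a b _ _ ha hb d hd
      rw [DirectSum.decompose_add, DirectSum.add_apply, Submodule.coe_add,
        ha d hd, hb d hd, add_zero]
    · intro c a _ ha d hd
      rw [DirectSum.decompose_smul, DirectSum.smul_apply, SetLike.val_smul,
        ha d hd, smul_zero]
  have hfin : {d : ℤ | ℳ d ≠ ⊥}.Finite := by
    refine Set.Finite.subset T.finite_toSet ?_
    intro d hd
    by_contra hdT
    apply hd
    refine (Submodule.eq_bot_iff _).mpr fun x hx => ?_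
    have := hsupp x d hdT
    rwa [DirectSum.decompose_of_mem_same ℳ hx] at this
  refine ⟨hfin, ?_, ?_⟩
  -- (ii)
  · intro D _ _ hmax
    have key : ∀ x ∈ ℳ D, ∀ r : MvPolynomial (Fin m) Λ,
        r • x = MvPolynomial.constantCoeff r • x := by
      intro x hx r
      conv_lhs => rw [← MvPolynomial.sum_homogeneousComponent r]
      rw [Finset.sum_smul, Finset.sum_eq_single 0]
      · rw [MvPolynomial.homogeneousComponent_zero, ← MvPolynomial.algebraMap_eq,
          algebraMap_smul]
        rfl
      · intro e _ he
        have hmem := hcompat e _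
          ((MvPolynomial.mem_homogeneousSubmodule _ _).mpr
            (MvPolynomial.homogeneousComponent_isHomogeneous e r)) D x hx
        rw [hmax (D + e) (by omega)] at hmem
        simpa using hmem
      · intro h0
        exact absurd (Finset.mem_range.mpr (Nat.succ_pos _)) h0
    refine ⟨fun x hx r => ?_, fun x hx i => ?_, key⟩
    · rw [key x hx r]; exact Submodule.smul_mem _ _ hx
    · rw [key x hx (MvPolynomial.X i), MvPolynomial.constantCoeff_X, zero_smul]
  -- (iii)
  · by_cases hall : ∀ d : ℤ, ℳ d = ⊥
    · have hzero : ∀ x : M, x = 0 := by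
        intro x
        rw [← DirectSum.sum_support_decompose ℳ x]
        exact Finset.sum_eq_zero fun d _ => hcomp0 x d (hall d)
      refine ⟨0, fun _ => ⊥, monotone_const, rfl, ?_, ?_, ?_⟩
      · refine le_antisymm le_top fun x _ => ?_
        rw [Submodule.mem_bot]; exact hzero x
      · intro t d x hx
        rw [Submodule.mem_bot] at hx ⊢
        subst hx; simp
      · intro t; exact t.elim0
    · push_neg at hall
      set s : Finset ℤ := hfin.toFinset with hs
      have hne : s.Nonempty := by
        obtain ⟨d₀, hd₀⟩ := hall
        exact ⟨d₀, hfin.mem_toFinset.mpr hd₀⟩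
      set D : ℤ := s.max' hne with hD
      set a : ℤ := s.min' hne with ha
      have haD : a ≤ D := s.min'_le _ (s.max'_mem hne)
      have hbot_hi : ∀ d : ℤ, D < d → ℳ d = ⊥ := by
        intro d hd
        by_contra h
        exact absurd (s.le_max' d (hfin.mem_toFinset.mpr h)) (by omega)
      have hbot_lo : ∀ d : ℤ, d < a → ℳ d = ⊥ := by
        intro d hd
        by_contra h
        exact absurd (s.min'_le d (hfin.mem_toFinset.mpr h)) (by omega)
      set k : ℕ := (D + 1 - a).toNat with hkdef
      have hk : (k : ℤ) = D + 1 - a := Int.toNat_of_nonneg (by omega)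
      refine ⟨k, fun t => auxF ℳ hcompat (D + 1 - (t.val : ℤ)), ?_, ?_, ?_, ?_, ?_⟩
      · intro t u htu x hx d hd
        refine hx d (lt_of_lt_of_le hd ?_)
        have : (t.val : ℤ) ≤ (u.val : ℤ) := by exact_mod_cast htu
        omega
      · refine le_antisymm (fun x hx => ?_) bot_le
        rw [Submodule.mem_bot, ← DirectSum.sum_support_decompose ℳ x]
        refine Finset.sum_eq_zero fun d _ => ?_
        by_cases hd : d < D + 1
        · exact hx d (by simpa using hd)
        · exact hcomp0 x d (hbot_hi d (by omega))
      · refine le_antisymm le_top fun x _ => ?_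
        intro d hd
        refine hcomp0 x d (hbot_lo d ?_)
        simp only [Fin.val_last] at hd
        omega
      · intro t d x hx d' hd'
        by_cases h : d' = d
        · subst h
          rw [DirectSum.decompose_of_mem_same ℳ (SetLike.coe_mem _)]
          exact hx d' hd'
        · exact DirectSum.decompose_of_mem_ne ℳ (SetLike.coe_mem _) (Ne.symm h)
      · intro t i x hx d hd
        rw [aux_homog_smul ℳ hcompat 1 _
          ((MvPolynomial.mem_homogeneousSubmodule _ _).mpr
            (MvPolynomial.isHomogeneous_X _ i)),
          Nat.cast_one, hx (d - 1) ?_, smul_zero]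
        simp only [Fin.val_succ, Fin.coe_castSucc] at *
        push_cast at *
        omega
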